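/- arXiv:math/0201237 — 3 statements merged into one kernel-verified Lean document; each statement's English description precedes it below -/
import Mathlib

section
/- Suppose a sequence $0<\nu_1<\nu_2<\cdots$ of positive reals satisfies the gap condition $\nu_m^2-\nu_{m-1}^2\ge \alpha\,\nu_m$ for all sufficiently large $m$ (for some $\alpha>0$), and there is a constant $c>0$ with $\nu_m\ge c\, m$ for large $m$. Then for $j<m-1$ (with $m$ large) one has $(\nu_m^2-\nu_j^2)^{-1/2} \le (\alpha(\nu_{j+1}+\cdots+\nu_m)/\nu_m)^{-1/2}\cdot 1$, and in particular $\sum_{j=1}^{m-2} \frac{2\alpha\nu_m}{(\nu_m^2-\nu_j^2)^{1/2}}\, j^{n-2} = O(\nu_m^{n-1})$ as $m\to\infty$, for any fixed integer $n\ge 2$. -/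
open Finset

lemma aux_sqrt_sum (m : ℕ) :
    ∑ d ∈ Finset.Icc 1 m, 1 / Real.sqrt d ≤ 2 * Real.sqrt m := by
  induction m with
  | zero => simp
  | succ m ih =>
    rw [Finset.sum_Icc_succ_top (by omega)]
    have h1 : Real.sqrt m ≤ Real.sqrt ((m : ℝ) + 1) :=
      Real.sqrt_le_sqrt (by linarith)
    have h2 : 0 < Real.sqrt ((m : ℝ) + 1) := Real.sqrt_pos.mpr (by positivity)
    have hm : Real.sqrt (m : ℝ) ^ 2 = m := Real.sq_sqrt (by positivity)
    have hm1 : Real.sqrt ((m : ℝ) + 1) ^ 2 = (m : ℝ) + 1 := Real.sq_sqrt (by positivity)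
    have key : 1 / Real.sqrt ((m : ℝ) + 1) ≤
        2 * Real.sqrt ((m : ℝ) + 1) - 2 * Real.sqrt m := by
      rw [div_le_iff₀ h2]
      nlinarith [Real.sqrt_nonneg (m : ℝ)]
    push_cast
    linarith

lemma aux_step (ν : ℕ → ℝ) (α : ℝ) (hpos : ∀ m, 0 < ν m) (hmono : StrictMono ν)
    (M : ℕ) (hgap : ∀ m ≥ M, α * ν m ≤ ν m ^ 2 - ν (m - 1) ^ 2) :
    ∀ k, M ≤ k → 1 ≤ k → α / 2 ≤ ν k - ν (k - 1) := by
  intro k hk hk1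
  have h := hgap k hk
  have h1 := hpos k
  have h2 := hpos (k - 1)
  have h3 : ν (k - 1) < ν k := hmono (by omega)
  nlinarith

lemma aux_diff (ν : ℕ → ℝ) (α : ℝ) (M : ℕ)
    (hstep : ∀ k, M ≤ k → 1 ≤ k → α / 2 ≤ ν k - ν (k - 1)) :
    ∀ j, M ≤ j + 1 → ∀ d : ℕ, α / 2 * d ≤ ν (j + d) - ν j := by
  intro j hj d
  induction d with
  | zero => simp
  | succ d ih =>
    have h := hstep (j + d + 1) (by omega) (by omega)
    rw [show j + d + 1 - 1 = j + d from by omega] at h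
    rw [show j + (d + 1) = j + d + 1 from rfl]
    push_cast
    linarith

lemma aux_sqdiff (ν : ℕ → ℝ) (α : ℝ) (M : ℕ)
    (hgap : ∀ m ≥ M, α * ν m ≤ ν m ^ 2 - ν (m - 1) ^ 2) :
    ∀ j, M ≤ j + 1 → ∀ d : ℕ, 1 ≤ d →
      α * ∑ k ∈ Finset.Icc (j + 1) (j + d), ν k ≤ ν (j + d) ^ 2 - ν j ^ 2 := by
  intro j hj
  refine Nat.le_induction ?_ ?_
  · have h := hgap (j + 1) hj
    rw [Nat.add_sub_cancel] at h
    simpa using h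
  · intro d hd ih
    rw [show j + (d + 1) = (j + d) + 1 from rfl,
      Finset.sum_Icc_succ_top (by omega), mul_add]
    have h := hgap (j + d + 1) (by omega)
    rw [Nat.add_sub_cancel] at h
    linarith

set_option maxHeartbeats 1600000 in
/-- For a strictly increasing positive sequence `ν` with the gap condition
`ν_m² - ν_{m-1}² ≥ α ν_m` and linear growth `ν_m ≥ c m` (both for large `m`):
for large `m` and `j < m - 1` one has
`(ν_m² - ν_j²)^{-1/2} ≤ (α (ν_{j+1} + ⋯ + ν_m)/ν_m)^{-1/2}`, and
`∑_{j=1}^{m-2} 2α ν_m (ν_m² - ν_j²)^{-1/2} j^{n-2} = O(ν_m^{n-1})`. -/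
theorem gap_sequence_sum_bound (ν : ℕ → ℝ) (α c : ℝ) (n : ℕ) (hn : 2 ≤ n)
    (hα : 0 < α) (hc : 0 < c)
    (hpos : ∀ m, 0 < ν m) (hmono : StrictMono ν)
    (hgap : ∃ M, ∀ m ≥ M, α * ν m ≤ ν m ^ 2 - ν (m - 1) ^ 2)
    (hlin : ∃ M, ∀ m ≥ M, c * m ≤ ν m) :
    (∃ M, ∀ m ≥ M, ∀ j, j < m - 1 →
      (ν m ^ 2 - ν j ^ 2) ^ (-(1/2) : ℝ) ≤
        (α * (∑ k ∈ Finset.Icc (j + 1) m, ν k) / ν m) ^ (-(1/2) : ℝ)) ∧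
    (∃ C M, ∀ m ≥ M,
      ∑ j ∈ Finset.Icc 1 (m - 2),
          2 * α * ν m / Real.sqrt (ν m ^ 2 - ν j ^ 2) * (j : ℝ) ^ (n - 2) ≤
        C * ν m ^ (n - 1)) := by
  obtain ⟨M₀, hg⟩ := hgap
  obtain ⟨M₁, hl⟩ := hlin
  have hstep := aux_step ν α hpos hmono M₀ hg
  constructor
  · -- Part 1
    refine ⟨M₀ + M₁ + ⌈1/c⌉₊ + ⌈(α + ν M₀ ^ 2)/(c*c)⌉₊ + 2, ?_⟩
    intro m hm j hj
    have hm2 : 2 ≤ m := by omega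
    have hcm : c * m ≤ ν m := hl m (by omega)
    have hnat1 : ⌈1/c⌉₊ ≤ m := by omega
    have h1c : (1:ℝ)/c ≤ m := le_trans (Nat.le_ceil _) (Nat.cast_le.mpr hnat1)
    have hν1 : 1 ≤ ν m := by
      have : 1 ≤ c * m := by rw [div_le_iff₀ hc] at h1c; linarith
      linarith
    have hS : 0 < ∑ k ∈ Finset.Icc (j + 1) m, ν k :=
      Finset.sum_pos (fun k _ => hpos k) (Finset.nonempty_Icc.mpr (by omega))
    have hbase : 0 < α * (∑ k ∈ Finset.Icc (j + 1) m, ν k) / ν m :=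
      div_pos (mul_pos hα hS) (hpos m)
    refine Real.rpow_le_rpow_of_nonpos hbase ?_ (by norm_num)
    by_cases hcase : M₀ ≤ j + 1
    · have h := aux_sqdiff ν α M₀ hg j hcase (m - j) (by omega)
      rw [show j + (m - j) = m from by omega] at h
      have hds : α * (∑ k ∈ Finset.Icc (j + 1) m, ν k) / ν m ≤
          α * (∑ k ∈ Finset.Icc (j + 1) m, ν k) :=
        div_le_self (le_of_lt (mul_pos hα hS)) hν1
      linarith
    · -- small j
      have hSle : (∑ k ∈ Finset.Icc (j + 1) m, ν k) ≤ ((m - j : ℕ) : ℝ) * ν m := by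
        have := Finset.sum_le_card_nsmul (Finset.Icc (j + 1) m) ν (ν m)
          (fun k hk => hmono.monotone (Finset.mem_Icc.mp hk).2)
        rw [Nat.card_Icc, show m + 1 - (j + 1) = m - j from by omega] at this
        simpa [nsmul_eq_mul] using this
      have hmjle : ((m - j : ℕ) : ℝ) ≤ (m : ℝ) := Nat.cast_le.mpr (Nat.sub_le m j)
      have hSle2 : (∑ k ∈ Finset.Icc (j + 1) m, ν k) ≤ (m : ℝ) * ν m :=
        le_trans hSle (mul_le_mul_of_nonneg_right hmjle (hpos m).le)
      have hdiv : α * (∑ k ∈ Finset.Icc (j + 1) m, ν k) / ν m ≤ α * m := by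
        rw [div_le_iff₀ (hpos m)]
        have := mul_le_mul_of_nonneg_left hSle2 hα.le
        linarith
      have hνj : ν j < ν M₀ := hmono (by omega)
      have hnat2 : ⌈(α + ν M₀ ^ 2)/(c*c)⌉₊ ≤ m := by omega
      have hceil : (α + ν M₀ ^ 2)/(c*c) ≤ m :=
        le_trans (Nat.le_ceil _) (Nat.cast_le.mpr hnat2)
      have h1m : (1:ℝ) ≤ m := Nat.one_le_cast.mpr (by omega)
      have e1 : α + ν M₀ ^ 2 ≤ c * c * m := by
        rw [div_le_iff₀ (by positivity)] at hceil; linarith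
      have e2 : c * c * ((m:ℝ) * m) ≤ ν m ^ 2 := by
        have hcm0 : (0:ℝ) ≤ c * m := by positivity
        nlinarith [mul_le_mul hcm hcm hcm0 (hpos m).le]
      have e3 : ν j ^ 2 ≤ ν M₀ ^ 2 := by nlinarith [hpos j, hνj]
      have e4 : α * m ≤ ν m ^ 2 - ν j ^ 2 := by
        have p1 := mul_le_mul_of_nonneg_right e1 (by linarith : (0:ℝ) ≤ (m:ℝ))
        have p2 : 0 ≤ ν M₀ ^ 2 * ((m:ℝ) - 1) :=
          mul_nonneg (sq_nonneg _) (by linarith)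
        nlinarith
      linarith
  · -- Part 2
    obtain ⟨k, rfl⟩ : ∃ k, n = k + 2 := ⟨n - 2, by omega⟩
    simp only [show k + 2 - 2 = k from rfl, show k + 2 - 1 = k + 1 from rfl]
    set K : ℝ := 2 * α / Real.sqrt (α / 4) with hK
    have hsα : 0 < Real.sqrt (α / 4) := Real.sqrt_pos.mpr (by linarith)
    have hK0 : 0 < K := div_pos (by linarith) hsα
    refine ⟨2 * K / (c ^ k * Real.sqrt c), 2 * M₀ + M₁ + ⌈1/c⌉₊ + 4, ?_⟩
    intro m hm
    have hcm : c * m ≤ ν m := hl m (by omega)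
    have hnat1 : ⌈1/c⌉₊ ≤ m := by omega
    have h1c : (1:ℝ)/c ≤ m := le_trans (Nat.le_ceil _) (Nat.cast_le.mpr hnat1)
    have hν1 : 1 ≤ ν m := by
      have : 1 ≤ c * m := by rw [div_le_iff₀ hc] at h1c; linarith
      linarith
    have hm4 : 4 ≤ m := by omega
    have hsν : 0 < Real.sqrt (ν m) := Real.sqrt_pos.mpr (hpos m)
    have hsqν : Real.sqrt (ν m) * Real.sqrt (ν m) = ν m :=
      Real.mul_self_sqrt (le_of_lt (hpos m))
    -- pointwise bound
    have hpoint : ∀ j ∈ Finset.Icc 1 (m - 2),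
        2 * α * ν m / Real.sqrt (ν m ^ 2 - ν j ^ 2) * (j : ℝ) ^ k ≤
          K * Real.sqrt (ν m) * (m : ℝ) ^ k * (1 / Real.sqrt ((m - j : ℕ) : ℝ)) := by
      intro j hj
      rw [Finset.mem_Icc] at hj
      have hx2 : (2 : ℝ) ≤ ((m - j : ℕ) : ℝ) := by
        have : (2:ℕ) ≤ m - j := by omega
        exact_mod_cast Nat.cast_le.mpr this
      have hxeq : ((m - j : ℕ) : ℝ) = (m : ℝ) - j := by
        have hjm : j ≤ m := by omega
        push_cast [Nat.cast_sub hjm]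
        ring
      set x : ℝ := ((m - j : ℕ) : ℝ) with hxdef
      have hx0 : 0 < x := by linarith
      have hD : α / 4 * x ≤ ν m - ν j := by
        by_cases hcase : M₀ ≤ j + 1
        · have h := aux_diff ν α M₀ hstep j hcase (m - j)
          rw [show j + (m - j) = m from by omega] at h
          nlinarith
        · have h := aux_diff ν α M₀ hstep M₀ (by omega) (m - M₀)
          rw [show M₀ + (m - M₀) = m from by omega] at h
          have hMm : ((m - M₀ : ℕ) : ℝ) = (m : ℝ) - M₀ := by
            have hMle : M₀ ≤ m := by omega
            push_cast [Nat.cast_sub hMle]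
            ring
          rw [hMm] at h
          have hνj : ν j < ν M₀ := hmono (by omega)
          have h2M : 2 * (M₀ : ℝ) ≤ m := by
            have : 2 * M₀ ≤ m := by omega
            exact_mod_cast Nat.cast_le.mpr this
          have hjnn : (0:ℝ) ≤ j := Nat.cast_nonneg j
          rw [hxeq]
          nlinarith
      have hT : α / 4 * x * ν m ≤ ν m ^ 2 - ν j ^ 2 := by
        have := mul_le_mul hD (by linarith [hpos j] : ν m ≤ ν m + ν j)
          (le_of_lt (hpos m)) (by nlinarith : (0:ℝ) ≤ ν m - ν j)
        nlinarith
      have hs0 : 0 < Real.sqrt (α / 4 * x * ν m) :=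
        Real.sqrt_pos.mpr (by positivity)
      have hs1 : Real.sqrt (α / 4 * x * ν m) ≤ Real.sqrt (ν m ^ 2 - ν j ^ 2) :=
        Real.sqrt_le_sqrt hT
      have hjn : ((j : ℝ)) ^ k ≤ ((m : ℝ)) ^ k := by
        apply pow_le_pow_left₀ (Nat.cast_nonneg j)
        exact Nat.cast_le.mpr (by omega)
      have hstep1 : 2 * α * ν m / Real.sqrt (ν m ^ 2 - ν j ^ 2) * (j : ℝ) ^ k ≤
          2 * α * ν m / Real.sqrt (α / 4 * x * ν m) * (m : ℝ) ^ k := by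
        gcongr
      have hsplit : Real.sqrt (α / 4 * x * ν m) =
          Real.sqrt (α / 4) * Real.sqrt x * Real.sqrt (ν m) := by
        rw [Real.sqrt_mul (by positivity), Real.sqrt_mul (by positivity)]
      have hsx : 0 < Real.sqrt x := Real.sqrt_pos.mpr hx0
      have heq : 2 * α * ν m / Real.sqrt (α / 4 * x * ν m) =
          K * Real.sqrt (ν m) * (1 / Real.sqrt x) := by
        obtain ⟨s, hs, hs2⟩ : ∃ s, Real.sqrt (ν m) = s ∧ s * s = ν m := ⟨_, rfl, hsqν⟩
        have hs0 : 0 < s := hs ▸ hsν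
        rw [hsplit, hK, hs, ← hs2]
        field_simp
      calc 2 * α * ν m / Real.sqrt (ν m ^ 2 - ν j ^ 2) * (j : ℝ) ^ k ≤
            2 * α * ν m / Real.sqrt (α / 4 * x * ν m) * (m : ℝ) ^ k := hstep1
        _ = K * Real.sqrt (ν m) * (m : ℝ) ^ k * (1 / Real.sqrt x) := by
            rw [heq]; ring
    have hsum1 := Finset.sum_le_sum hpoint
    have hre : ∑ j ∈ Finset.Icc 1 (m - 2), (1 / Real.sqrt ((m - j : ℕ) : ℝ)) =
        ∑ d ∈ Finset.Icc 2 (m - 1), (1 / Real.sqrt (d : ℝ)) := by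
      apply Finset.sum_nbij' (i := fun j => m - j) (j := fun d => m - d)
      · intro a ha; rw [Finset.mem_Icc] at *; omega
      · intro a ha; rw [Finset.mem_Icc] at *; omega
      · intro a ha; rw [Finset.mem_Icc] at ha; omega
      · intro a ha; rw [Finset.mem_Icc] at ha; omega
      · intro a ha; rfl
    have hre2 : ∑ d ∈ Finset.Icc 2 (m - 1), (1 / Real.sqrt (d : ℝ)) ≤
        ∑ d ∈ Finset.Icc 1 m, (1 / Real.sqrt (d : ℝ)) := by
      apply Finset.sum_le_sum_of_subset_of_nonneg
      · exact Finset.Icc_subset_Icc (by omega) (by omega)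
      · intro i _ _; positivity
    have hsum2 : ∑ j ∈ Finset.Icc 1 (m - 2), (1 / Real.sqrt ((m - j : ℕ) : ℝ)) ≤
        2 * Real.sqrt m := by
      rw [hre]
      exact le_trans hre2 (aux_sqrt_sum m)
    have hKν : 0 ≤ K * Real.sqrt (ν m) * (m : ℝ) ^ k := by positivity
    have hsum3 : ∑ j ∈ Finset.Icc 1 (m - 2),
          K * Real.sqrt (ν m) * (m : ℝ) ^ k * (1 / Real.sqrt ((m - j : ℕ) : ℝ)) ≤
        K * Real.sqrt (ν m) * (m : ℝ) ^ k * (2 * Real.sqrt m) := by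
      rw [← Finset.mul_sum]
      exact mul_le_mul_of_nonneg_left hsum2 hKν
    -- final comparison
    have hmν : (m : ℝ) ≤ ν m / c := by rw [le_div_iff₀ hc]; linarith
    have hmpow : (m : ℝ) ^ k ≤ (ν m / c) ^ k :=
      pow_le_pow_left₀ (Nat.cast_nonneg m) hmν _
    have hmsqrt : Real.sqrt m ≤ Real.sqrt (ν m) / Real.sqrt c := by
      rw [← Real.sqrt_div (hpos m).le]
      exact Real.sqrt_le_sqrt hmν
    have hfin1 : K * Real.sqrt (ν m) * (m : ℝ) ^ k * (2 * Real.sqrt m) ≤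
        K * Real.sqrt (ν m) * (ν m / c) ^ k * (2 * (Real.sqrt (ν m) / Real.sqrt c)) := by
      gcongr
    have hfin2 : K * Real.sqrt (ν m) * (ν m / c) ^ k * (2 * (Real.sqrt (ν m) / Real.sqrt c)) =
        2 * K / (c ^ k * Real.sqrt c) * ν m ^ (k + 1) := by
      have hsc : 0 < Real.sqrt c := Real.sqrt_pos.mpr hc
      obtain ⟨s, hs, hs2⟩ : ∃ s, Real.sqrt (ν m) = s ∧ s * s = ν m := ⟨_, rfl, hsqν⟩
      have hs0 : 0 < s := hs ▸ hsν
      rw [hs, ← hs2]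
      rw [div_pow]
      field_simp
      ring
    calc ∑ j ∈ Finset.Icc 1 (m - 2),
          2 * α * ν m / Real.sqrt (ν m ^ 2 - ν j ^ 2) * (j : ℝ) ^ k ≤
        _ := hsum1
      _ ≤ K * Real.sqrt (ν m) * (m : ℝ) ^ k * (2 * Real.sqrt m) := hsum3
      _ ≤ _ := hfin1
      _ = _ := hfin2
end

section
/- Let $H$ be a Hilbert space, $z\mapsto K(z)$ a family of compact operators depending holomorphically on $z$ in a connected open set $U$, and suppose $I+K(z_0)$ is invertible for some $z_0\in U$. Then the set of $z\in U$ at which $I+K(z)$ fails to be invertible is discrete in $U$, and for $z$ near $z_0$ the invertibility of $I+K(z)$ is equivalent to the invertibility of $I+(I+K(z_0))^{-1}(K(z)-K(z_0))$. -/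
open Filter

open Metric

section Swap
variable {R : Type*} [Ring R]

lemma af_isUnit_one_add_mul_swap {a b : R} (h : IsUnit (1 + a * b)) :
    IsUnit (1 + b * a) := by
  obtain ⟨u, hu⟩ := h
  have h1 : (1 + a * b) * (↑u⁻¹ : R) = 1 := by rw [← hu]; exact u.mul_inv
  have h2 : (↑u⁻¹ : R) * (1 + a * b) = 1 := by rw [← hu]; exact u.inv_mul
  refine isUnit_iff_exists.2 ⟨1 - b * ↑u⁻¹ * a, ?_, ?_⟩
  · have e : (1 + b * a) * (1 - b * ↑u⁻¹ * a)
        = 1 + b * a - b * ((1 + a * b) * ↑u⁻¹) * a := by noncomm_ring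
    rw [e, h1]; noncomm_ring
  · have e : (1 - b * ↑u⁻¹ * a) * (1 + b * a)
        = 1 + b * a - b * (↑u⁻¹ * (1 + a * b)) * a := by noncomm_ring
    rw [e, h2]; noncomm_ring

lemma af_isUnit_one_add_comm (a b : R) : IsUnit (1 + a * b) ↔ IsUnit (1 + b * a) :=
  ⟨af_isUnit_one_add_mul_swap, af_isUnit_one_add_mul_swap⟩

end Swap


lemma af_exists_finiteRank_approx {H : Type*} [NormedAddCommGroup H]
    [InnerProductSpace ℂ H] [CompleteSpace H] (T : H →L[ℂ] H) (hT : IsCompactOperator T)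
    {ε : ℝ} (hε : 0 < ε) :
    ∃ (E : Submodule ℂ H) (F : H →L[ℂ] H),
      FiniteDimensional ℂ E ∧ (∀ x, F x ∈ E) ∧ ‖T - F‖ ≤ ε := by
  have hT' : IsCompactOperator ⇑(T : H →ₗ[ℂ] H) := hT
  obtain ⟨C, hC, hTC⟩ := hT'.image_subset_compact_of_bounded (𝕜₁ := ℂ)
    (isBounded_closedBall (x := (0 : H)) (r := 1))
  obtain ⟨t, -, htfin, hcover⟩ := hC.finite_cover_balls hε
  set E := Submodule.span ℂ t with hE
  haveI : FiniteDimensional ℂ E := FiniteDimensional.span_of_finite ℂ htfin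
  haveI : CompleteSpace E := FiniteDimensional.complete ℂ E
  set F : H →L[ℂ] H := E.subtypeL.comp ((E.orthogonalProjectionOnto).comp T) with hF
  have hFE : ∀ x, F x ∈ E := fun x => (E.orthogonalProjectionOnto (T x)).2
  refine ⟨E, F, inferInstance, hFE, ?_⟩
  have key : ∀ x : H, ‖x‖ ≤ 1 → ‖(T - F) x‖ ≤ ε := by
    intro x hx
    have hxmem : x ∈ Metric.closedBall (0 : H) 1 := by
      simpa [mem_closedBall, dist_eq_norm] using hx
    have hTx : T x ∈ C := hTC ⟨x, hxmem, rfl⟩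
    obtain ⟨c, hct, hcball⟩ := Set.mem_iUnion₂.1 (hcover hTx)
    have hcE : c ∈ E := Submodule.subset_span hct
    have hmin : ‖T x - F x‖ ≤ ‖T x - c‖ := by
      calc ‖T x - F x‖ = ‖T x - ↑(E.orthogonalProjectionOnto (T x))‖ := rfl
        _ = ⨅ y : E, ‖T x - ↑y‖ := Submodule.starProjection_minimal _
        _ ≤ ‖T x - ↑(⟨c, hcE⟩ : E)‖ :=
            ciInf_le ⟨0, by rintro r ⟨y, rfl⟩; exact norm_nonneg _⟩ _
        _ = ‖T x - c‖ := rfl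
    have hlt : ‖T x - c‖ ≤ ε := by
      have := mem_ball.1 hcball
      rw [dist_eq_norm] at this
      exact this.le
    calc ‖(T - F) x‖ = ‖T x - F x‖ := by simp
      _ ≤ ε := hmin.trans hlt
  refine ContinuousLinearMap.opNorm_le_bound _ hε.le fun x => ?_
  rcases eq_or_ne x 0 with rfl | hx
  · simp
  · have hxn : 0 < ‖x‖ := norm_pos_iff.2 hx
    have h1 : ‖(‖x‖⁻¹ • x)‖ ≤ 1 := by
      rw [norm_smul, norm_inv, norm_norm, inv_mul_cancel₀ hxn.ne']
    have h2 := key _ h1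
    rw [(T - F).map_smul_of_tower, norm_smul, norm_inv, norm_norm] at h2
    calc ‖(T - F) x‖ = ‖x‖ * (‖x‖⁻¹ * ‖(T - F) x‖) := by field_simp
      _ ≤ ‖x‖ * ε := mul_le_mul_of_nonneg_left h2 hxn.le
      _ = ε * ‖x‖ := mul_comm _ _


lemma af_isUnit_one_add_iff_restrict {H : Type*} [NormedAddCommGroup H]
    [InnerProductSpace ℂ H] [CompleteSpace H] (E : Submodule ℂ H) [FiniteDimensional ℂ E]
    (R : H →L[ℂ] H) (hR : ∀ x, R x ∈ E)
    (hmap : ∀ x ∈ E, ((1 + R : H →L[ℂ] H) : H →ₗ[ℂ] H) x ∈ E) :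
    IsUnit (1 + R) ↔ IsUnit (((1 + R : H →L[ℂ] H) : H →ₗ[ℂ] H).restrict hmap) := by
  set S := ((1 + R : H →L[ℂ] H) : H →ₗ[ℂ] H).restrict hmap with hS
  have hcoeS : ∀ e : E, ((S e : E) : H) = (e : H) + R e := by
    intro e
    rw [LinearMap.restrict_coe_apply]
    simp
  constructor
  · intro h
    obtain ⟨u, hu⟩ := h
    have hinj : Function.Injective ⇑(1 + R : H →L[ℂ] H) := by
      intro a b hab
      have h2 : ((↑u⁻¹ * ↑u : H →L[ℂ] H)) a = (↑u⁻¹ * ↑u : H →L[ℂ] H) b := by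
        simp only [ContinuousLinearMap.mul_apply, hu, hab]
      rwa [u.inv_mul, ContinuousLinearMap.one_apply, ContinuousLinearMap.one_apply] at h2
    rw [LinearMap.isUnit_iff_ker_eq_bot, LinearMap.ker_eq_bot]
    intro e e' hee
    have h3 : (1 + R : H →L[ℂ] H) (e : H) = (1 + R : H →L[ℂ] H) (e' : H) := by
      have := congrArg (Subtype.val) hee
      rwa [LinearMap.restrict_coe_apply, LinearMap.restrict_coe_apply] at this
    exact Subtype.ext (hinj h3)
  · intro h
    obtain ⟨u, hu⟩ := h
    have hST : ∀ e : E, S ((↑u⁻¹ : E →ₗ[ℂ] E) e) = e := by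
      intro e
      have := congrArg (fun f : E →ₗ[ℂ] E => f e) u.mul_inv
      simpa [Module.End.mul_apply, hu] using this
    have hTS : ∀ e : E, (↑u⁻¹ : E →ₗ[ℂ] E) (S e) = e := by
      intro e
      have := congrArg (fun f : E →ₗ[ℂ] E => f e) u.inv_mul
      simpa [Module.End.mul_apply, hu] using this
    let Tc : E →L[ℂ] E := LinearMap.toContinuousLinearMap (↑u⁻¹ : E →ₗ[ℂ] E)
    have hTc : ∀ e : E, Tc e = (↑u⁻¹ : E →ₗ[ℂ] E) e := fun e => by
      simp [Tc, LinearMap.coe_toContinuousLinearMap']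
    haveI : CompleteSpace E := FiniteDimensional.complete ℂ E
    let ρ : H →L[ℂ] E := R.codRestrict E hR
    have hρ : ∀ x : H, ((ρ x : E) : H) = R x := fun x => rfl
    let Vm : H →L[ℂ] H := 1 - E.subtypeL.comp (Tc.comp ρ)
    have hVm : ∀ y : H, Vm y = y - ↑(Tc (ρ y)) := fun y => rfl
    refine isUnit_iff_exists.2 ⟨Vm, ?_, ?_⟩
    · ext y
      show (1 + R : H →L[ℂ] H) (Vm y) = y
      rw [hVm]
      have h4 : (↑(S (Tc (ρ y))) : H) = R y := by
        rw [hTc, hST]; exact hρ y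
      calc (1 + R : H →L[ℂ] H) (y - ↑(Tc (ρ y)))
          = y + R y - ((↑(Tc (ρ y)) : H) + R ↑(Tc (ρ y))) := by
            simp only [ContinuousLinearMap.add_apply, ContinuousLinearMap.one_apply, map_sub]
        _ = y + R y - ↑(S (Tc (ρ y))) := by rw [hcoeS]
        _ = y := by rw [h4]; abel
    · ext x
      show Vm ((1 + R : H →L[ℂ] H) x) = x
      have h5 : ρ ((1 + R : H →L[ℂ] H) x) = S (ρ x) := by
        apply Subtype.ext
        rw [hcoeS, hρ, hρ]
        simp only [ContinuousLinearMap.add_apply, ContinuousLinearMap.one_apply, map_add]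
      rw [hVm, h5, hTc, hTS]
      simp only [ContinuousLinearMap.add_apply, ContinuousLinearMap.one_apply, hρ]
      abel

lemma af_local_dichotomy {H : Type*} [NormedAddCommGroup H] [InnerProductSpace ℂ H]
    [CompleteSpace H] (U : Set ℂ) (hU : IsOpen U) (K : ℂ → H →L[ℂ] H)
    (hK : DifferentiableOn ℂ K U) (hcompact : ∀ z ∈ U, IsCompactOperator (K z))
    (w : ℂ) (hw : w ∈ U) :
    (∀ᶠ z in nhds w, ¬ IsUnit (1 + K z)) ∨
      (∀ᶠ z in nhdsWithin w {w}ᶜ, IsUnit (1 + K z)) := by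
  classical
  -- finite rank approximation of K w
  obtain ⟨E, F, hEfin, hFE, hF⟩ :=
    af_exists_finiteRank_approx (K w) (hcompact w hw) (ε := 1/2) (by norm_num)
  haveI : FiniteDimensional ℂ E := hEfin
  haveI : CompleteSpace E := FiniteDimensional.complete ℂ E
  -- a ball around w inside U on which ‖K z - F‖ < 1
  have hcont : ContinuousAt K w := ((hK w hw).differentiableAt (hU.mem_nhds hw)).continuousAt
  have hev : ∀ᶠ z in nhds w, ‖K z - K w‖ < 1/4 ∧ z ∈ U := by
    refine Filter.Eventually.and ?_ (hU.eventually_mem hw)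
    have hc2 : ContinuousAt (fun z => ‖K z - K w‖) w := (hcont.sub continuousAt_const).norm
    have h0 : ‖K w - K w‖ < 1/4 := by norm_num
    exact hc2.eventually_lt continuousAt_const h0
  obtain ⟨r, hr, hball⟩ := Metric.eventually_nhds_iff_ball.1 hev
  set B := Metric.ball w r with hB
  have hwB : w ∈ B := Metric.mem_ball_self hr
  have hBU : B ⊆ U := fun z hz => (hball z hz).2
  have hopenB : IsOpen B := Metric.isOpen_ball
  have hnorm : ∀ z ∈ B, ‖F - K z‖ < 1 := by
    intro z hz
    have h1 : ‖K z - K w‖ < 1/4 := (hball z hz).1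
    have e1 : F - K z = (F - K w) + (K w - K z) := by abel
    rw [e1]
    calc ‖(F - K w) + (K w - K z)‖ ≤ ‖F - K w‖ + ‖K w - K z‖ := norm_add_le _ _
      _ = ‖F - K w‖ + ‖K z - K w‖ := by rw [norm_sub_rev (K w) (K z)]
      _ < 1/2 + 1/2 := add_lt_add_of_le_of_lt (by rw [norm_sub_rev]; exact hF) (by linarith)
      _ = 1 := by norm_num
  -- invertibility of 1 + (K z - F) on B
  have hA : ∀ z ∈ B, IsUnit ((1 : H →L[ℂ] H) + (K z - F)) := by
    intro z hz
    have e2 : (1 : H →L[ℂ] H) - (F - K z) = 1 + (K z - F) := by abel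
    exact e2 ▸ (Units.oneSub (F - K z) (hnorm z hz)).isUnit
  set g : ℂ → H →L[ℂ] H := fun z => Ring.inverse (1 + (K z - F)) with hg
  have hAg : ∀ z ∈ B, ((1 : H →L[ℂ] H) + (K z - F)) * g z = 1 := fun z hz =>
    Ring.mul_inverse_cancel _ (hA z hz)
  -- the finite rank perturbation
  set R : ℂ → H →L[ℂ] H := fun z => F * g z with hR
  have hRmem : ∀ z, ∀ x : H, R z x ∈ E := fun z x => hFE _
  have hmap : ∀ z, ∀ x ∈ E, ((1 + R z : H →L[ℂ] H) : H →ₗ[ℂ] H) x ∈ E := by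
    intro z x hx
    have : ((1 + R z : H →L[ℂ] H) : H →ₗ[ℂ] H) x = x + R z x := by simp
    rw [this]
    exact E.add_mem hx (hRmem z x)
  set S : ℂ → (E →ₗ[ℂ] E) := fun z => ((1 + R z : H →L[ℂ] H) : H →ₗ[ℂ] H).restrict (hmap z)
    with hSdef
  -- basis and determinant
  set n := Module.finrank ℂ E with hn
  set b : Module.Basis (Fin n) ℂ E := Module.finBasis ℂ E with hb
  set f : ℂ → ℂ := fun z => (LinearMap.toMatrixAlgEquiv b (S z)).det with hf2
  -- the equivalence on B
  have key : ∀ z ∈ B, (IsUnit (1 + K z) ↔ f z ≠ 0) := by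
    intro z hz
    have hfact : ((1 : H →L[ℂ] H) + (K z - F)) * (1 + g z * F) = 1 + K z := by
      calc ((1 : H →L[ℂ] H) + (K z - F)) * (1 + g z * F)
          = (1 + (K z - F)) + (((1 : H →L[ℂ] H) + (K z - F)) * g z) * F := by noncomm_ring
        _ = (1 + (K z - F)) + 1 * F := by rw [hAg z hz]
        _ = 1 + K z := by noncomm_ring
    have i1 : IsUnit (1 + K z) ↔ IsUnit ((1 : H →L[ℂ] H) + g z * F) := by
      rw [← hfact, ← (hA z hz).unit_spec]
      exact Units.isUnit_units_mul _ _
    have i2 : IsUnit ((1 : H →L[ℂ] H) + g z * F) ↔ IsUnit (1 + R z) := by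
      rw [hR]
      exact af_isUnit_one_add_comm _ _
    have i3 : IsUnit (1 + R z) ↔ IsUnit (S z) :=
      af_isUnit_one_add_iff_restrict E (R z) (hRmem z) (hmap z)
    have i4 : IsUnit (S z) ↔ f z ≠ 0 := by
      constructor
      · intro h
        have h5 : IsUnit (LinearMap.toMatrixAlgEquiv b (S z)) :=
          h.map (LinearMap.toMatrixAlgEquiv b)
        exact isUnit_iff_ne_zero.1 ((Matrix.isUnit_iff_isUnit_det _).1 h5)
      · intro h
        have h5 : IsUnit (LinearMap.toMatrixAlgEquiv b (S z)) :=
          (Matrix.isUnit_iff_isUnit_det _).2 (isUnit_iff_ne_zero.2 h)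
        have h6 := h5.map (LinearMap.toMatrixAlgEquiv b).symm
        simpa using h6
    rw [i1, i2, i3, i4]
  -- differentiability of f on B
  have hgdiff : DifferentiableOn ℂ g B := by
    intro z hz
    have h1 : DifferentiableWithinAt ℂ (fun z => (1 : H →L[ℂ] H) + (K z - F)) B z :=
      (((hK.mono hBU) z hz).sub_const F).const_add 1
    exact h1.inverse (hA z hz)
  set P : H →L[ℂ] E := E.orthogonalProjectionOnto with hP
  set ξ : Fin n → (E →L[ℂ] ℂ) := fun i => LinearMap.toContinuousLinearMap (b.coord i) with hξ
  set φ : ℂ → Matrix (Fin n) (Fin n) ℂ := fun z => Matrix.of fun i j =>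
    ξ i (P (((b j : H)) + F (g z (b j)))) with hφ
  have hφeq : ∀ z, LinearMap.toMatrixAlgEquiv b (S z) = φ z := by
    intro z
    ext i j
    rw [LinearMap.toMatrixAlgEquiv_apply]
    have hSbj : ((S z (b j) : E) : H) = (b j : H) + F (g z (b j)) := by
      rw [hSdef]
      simp only [LinearMap.restrict_coe_apply]
      simp [hR, ContinuousLinearMap.mul_apply]
    have hPe : P (((b j : H)) + F (g z (b j))) = S z (b j) := by
      rw [← hSbj, hP]
      exact Submodule.orthogonalProjectionOnto_mem_subspace_eq_self _
    show b.repr (S z (b j)) i = ξ i (P (((b j : H)) + F (g z (b j))))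
    rw [hPe, hξ]
    simp [LinearMap.coe_toContinuousLinearMap', Module.Basis.coord_apply]
  have hφdiff : ∀ i j, DifferentiableOn ℂ (fun z => φ z i j) B := by
    intro i j
    intro z hz
    have h1 : DifferentiableWithinAt ℂ (fun z => g z (b j : H)) B z :=
      (hgdiff z hz).clm_apply (differentiableWithinAt_const _)
    have h2 : DifferentiableWithinAt ℂ (fun z => F (g z (b j : H))) B z :=
      (F.differentiable.differentiableAt).comp_differentiableWithinAt z h1
    have h3 : DifferentiableWithinAt ℂ (fun z => (b j : H) + F (g z (b j : H))) B z :=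
      h2.const_add _
    have h4 : DifferentiableWithinAt ℂ (fun z => P ((b j : H) + F (g z (b j : H)))) B z :=
      (P.differentiable.differentiableAt).comp_differentiableWithinAt z h3
    exact ((ξ i).differentiable.differentiableAt).comp_differentiableWithinAt z h4
  have hfdiff : DifferentiableOn ℂ f B := by
    have hfeq : ∀ z, f z = ∑ σ : Equiv.Perm (Fin n),
        ((Equiv.Perm.sign σ : ℤ) : ℂ) * ∏ i, φ z (σ i) i := by
      intro z
      rw [hf2]
      simp only [hφeq]
      rw [Matrix.det_apply]
      congr 1
      ext σ
      rw [Units.smul_def, zsmul_eq_mul]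
    intro z hz
    have hd : DifferentiableWithinAt ℂ (fun z => ∑ σ : Equiv.Perm (Fin n),
        ((Equiv.Perm.sign σ : ℤ) : ℂ) * ∏ i, φ z (σ i) i) B z := by
      apply DifferentiableWithinAt.fun_sum
      intro σ _
      apply DifferentiableWithinAt.const_mul
      exact DifferentiableWithinAt.fun_finsetProd (fun i _ => hφdiff (σ i) i z hz)
    exact hd.congr (fun y _ => hfeq y) (hfeq z)
  have hfan : AnalyticAt ℂ f w := hfdiff.analyticAt (hopenB.mem_nhds hwB)
  rcases hfan.eventually_eq_zero_or_eventually_ne_zero with h | h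
  · left
    have hBmem : ∀ᶠ z in nhds w, z ∈ B := hopenB.eventually_mem hwB
    filter_upwards [h, hBmem] with z hz0 hzB
    intro hunit
    exact (key z hzB).1 hunit hz0
  · right
    have hBmem : ∀ᶠ z in nhdsWithin w {w}ᶜ, z ∈ B :=
      eventually_nhdsWithin_of_eventually_nhds (hopenB.eventually_mem hwB)
    filter_upwards [h, hBmem] with z hz0 hzB
    exact (key z hzB).2 hz0

/-- Analytic Fredholm theory: if `z ↦ K(z)` is a holomorphic family of compact operators on a
connected open set `U` and `I + K(z₀)` is invertible at some `z₀ ∈ U`, then the set of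
`z ∈ U` where `I + K(z)` fails to be invertible is discrete in `U`, and near `z₀`
invertibility of `I + K(z)` is equivalent to invertibility of
`I + (I + K(z₀))⁻¹ (K(z) - K(z₀))`. -/
theorem analytic_fredholm {H : Type*} [NormedAddCommGroup H] [InnerProductSpace ℂ H]
    [CompleteSpace H] (U : Set ℂ) (hU : IsOpen U) (hUconn : IsConnected U)
    (K : ℂ → H →L[ℂ] H) (hK : DifferentiableOn ℂ K U)
    (hcompact : ∀ z ∈ U, IsCompactOperator (K z))
    (z₀ : ℂ) (hz₀ : z₀ ∈ U) (hinv : IsUnit (1 + K z₀)) :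
    (∀ w ∈ U, ∀ᶠ z in nhdsWithin w {w}ᶜ, z ∈ U → IsUnit (1 + K z)) ∧
    (∀ᶠ z in nhds z₀,
      (IsUnit (1 + K z) ↔
        IsUnit (1 + (↑hinv.unit⁻¹ : H →L[ℂ] H) * (K z - K z₀)))) := by
  constructor
  · -- discreteness via a connectedness argument
    have easy : ∀ z ∈ U, IsUnit (1 + K z) → ∀ᶠ y in nhds z, IsUnit (1 + K y) := by
      intro z hz hunit
      have hc : ContinuousAt (fun y => 1 + K y) z :=
        continuousAt_const.add ((hK z hz).differentiableAt (hU.mem_nhds hz)).continuousAt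
      exact hc.eventually_mem (Units.isOpen.mem_nhds hunit)
    have dich : ∀ w ∈ U, (∀ᶠ z in nhds w, ¬ IsUnit (1 + K z)) ∨
        (∀ᶠ z in nhdsWithin w {w}ᶜ, IsUnit (1 + K z)) := fun w hw =>
      af_local_dichotomy U hU K hK hcompact w hw
    set V : Set ℂ := {z | z ∈ U ∧ ∀ᶠ y in nhds z, ¬ IsUnit (1 + K y)} with hV
    set W : Set ℂ := {z | z ∈ U ∧ ¬ (∀ᶠ y in nhds z, ¬ IsUnit (1 + K y))} with hW
    have hVopen : IsOpen V := by
      rw [isOpen_iff_mem_nhds]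
      rintro z ⟨hzU, hzev⟩
      obtain ⟨O, hOnhds, hOopen, hOsub⟩ :
          ∃ O, O ⊆ {y | ¬ IsUnit (1 + K y)} ∧ IsOpen O ∧ z ∈ O := by
        obtain ⟨O, hO1, hO2, hO3⟩ := _root_.eventually_nhds_iff.1 hzev
        exact ⟨O, fun y hy => hO1 y hy, hO2, hO3⟩
      have hO2nhds : O ∩ U ∈ nhds z := by
        exact Filter.inter_mem (hOopen.mem_nhds hOsub) (hU.mem_nhds hzU)
      refine Filter.mem_of_superset hO2nhds ?_
      rintro y ⟨hyO, hyU⟩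
      exact ⟨hyU, (hOopen.eventually_mem hyO).mono fun x hx => hOnhds hx⟩
    have hWopen : IsOpen W := by
      rw [isOpen_iff_mem_nhds]
      rintro z ⟨hzU, hzev⟩
      have hcase := (dich z hzU).resolve_left hzev
      obtain ⟨O, hO1, hO2, hO3⟩ := _root_.eventually_nhds_iff.1 (eventually_nhdsWithin_iff.1 hcase)
      have hO2nhds : O ∩ U ∈ nhds z := Filter.inter_mem (hO2.mem_nhds hO3) (hU.mem_nhds hzU)
      refine Filter.mem_of_superset hO2nhds ?_
      rintro y ⟨hyO, hyU⟩
      refine ⟨hyU, ?_⟩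
      rcases eq_or_ne y z with rfl | hyz
      · exact hzev
      · have hyunit : IsUnit (1 + K y) := hO1 y hyO hyz
        intro hcon
        obtain ⟨x, hx1, hx2⟩ := (hcon.and (easy y hyU hyunit)).exists
        exact hx1 hx2
    -- U is covered by V and W, which are disjoint
    have hcover : U ⊆ V ∪ W := by
      intro z hz
      by_cases hzev : ∀ᶠ y in nhds z, ¬ IsUnit (1 + K y)
      · exact Or.inl ⟨hz, hzev⟩
      · exact Or.inr ⟨hz, hzev⟩
    have hWz₀ : z₀ ∈ U ∩ W := by
      refine ⟨hz₀, hz₀, ?_⟩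
      intro hcon
      obtain ⟨x, hx1, hx2⟩ := (hcon.and (easy z₀ hz₀ hinv)).exists
      exact hx1 hx2
    have hVempty : U ∩ V = ∅ := by
      by_contra hne
      obtain ⟨x, hx⟩ := hUconn.isPreconnected V W hVopen hWopen hcover
        (Set.nonempty_iff_ne_empty.2 hne) ⟨z₀, hWz₀⟩
      exact hx.2.2.2 hx.2.1.2
    intro w hw
    have hw2 : w ∉ V := by
      intro hwV
      have : w ∈ U ∩ V := ⟨hw, hwV⟩
      rw [hVempty] at this
      exact this
    have hcase : ∀ᶠ z in nhdsWithin w {w}ᶜ, IsUnit (1 + K z) := by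
      rcases dich w hw with h | h
      · exact absurd ⟨hw, h⟩ hw2
      · exact h
    exact hcase.mono fun z hz _ => hz
  · -- the factorization near z₀ (in fact everywhere)
    refine Filter.Eventually.of_forall fun z => ?_
    have h1 : (1 + K z₀) * (↑hinv.unit⁻¹ : H →L[ℂ] H) = 1 := hinv.mul_val_inv
    have hfact : (1 + K z₀) * (1 + (↑hinv.unit⁻¹ : H →L[ℂ] H) * (K z - K z₀)) = 1 + K z := by
      calc (1 + K z₀) * (1 + (↑hinv.unit⁻¹ : H →L[ℂ] H) * (K z - K z₀))
          = (1 + K z₀) + ((1 + K z₀) * (↑hinv.unit⁻¹ : H →L[ℂ] H)) * (K z - K z₀) := by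
            noncomm_ring
        _ = (1 + K z₀) + 1 * (K z - K z₀) := by rw [h1]
        _ = 1 + K z := by noncomm_ring
    have h2 := Units.isUnit_units_mul hinv.unit
      (1 + (↑hinv.unit⁻¹ : H →L[ℂ] H) * (K z - K z₀))
    rw [hinv.unit_spec] at h2
    rw [← hfact]
    exact h2
end

section
/- If a sequence of positive reals $(\nu_m)$ satisfies the Weyl-type two-sided bound $c_1 m \le \nu_m \le c_2 m$ for large $m$ (some $c_1,c_2>0$) and $M_m$ denotes multiplicities with $M_m \le C m^{n-2}$, then $\sum_{j=1}^{m} M_j \cdot \min\big(\sqrt{\alpha\nu_m},\, 2\alpha\nu_m(\nu_m^2-\nu_j^2)^{-1/2}\big) = O(m^{n-1})$ as $m\to\infty$, provided additionally $\nu_m^2-\nu_{m-1}^2\ge\alpha\nu_m$ for large $m$. -/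
open Finset

private lemma sum_inv_sqrt_le (m : ℕ) :
    ∑ d ∈ Finset.Icc 1 m, (1:ℝ) / Real.sqrt d ≤ 2 * Real.sqrt m := by
  induction m with
  | zero => simp
  | succ m ih =>
    rw [Finset.sum_Icc_succ_top (by omega : 1 ≤ m + 1)]
    have h1 : Real.sqrt m ≤ Real.sqrt ((m:ℝ)+1) := by
      apply Real.sqrt_le_sqrt; linarith
    have h2 : (0:ℝ) < Real.sqrt ((m:ℝ)+1) := Real.sqrt_pos.2 (by positivity)
    have h3 : Real.sqrt ((m:ℝ)+1) ^ 2 = (m:ℝ)+1 := Real.sq_sqrt (by positivity)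
    have h5 : (1:ℝ)/Real.sqrt ((m:ℝ)+1) ≤ 2*Real.sqrt ((m:ℝ)+1) - 2*Real.sqrt m := by
      rw [div_le_iff₀ h2]
      nlinarith [sq_nonneg (Real.sqrt ((m:ℝ)+1) - Real.sqrt m), Real.sqrt_nonneg (m:ℝ), Real.sq_sqrt (by positivity : (0:ℝ) ≤ (m:ℝ))]
    push_cast
    linarith

private lemma sum_reflect (m : ℕ) (f : ℕ → ℝ) :
    ∑ j ∈ Finset.Icc 1 m, f (m - j + 1) = ∑ d ∈ Finset.Icc 1 m, f d := by
  apply Finset.sum_nbij' (fun j => m - j + 1) (fun d => m - d + 1) <;>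
    intros <;> simp_all [Finset.mem_Icc] <;> omega

private lemma telescope_ge (f : ℕ → ℝ) (g : ℝ) (j : ℕ) :
    ∀ m, j ≤ m → (∀ k, j < k → k ≤ m → g ≤ f k - f (k-1)) →
      ((m - j : ℕ) : ℝ) * g ≤ f m - f j := by
  intro m
  induction m with
  | zero => intro h _; interval_cases j; simp
  | succ m ih =>
    intro hjm hstep
    rcases Nat.eq_or_lt_of_le hjm with h | h
    · simp [← h]
    · have hjm' : j ≤ m := by omega
      have h1 := ih hjm' (fun k hk1 hk2 => hstep k hk1 (by omega))
      have h2 := hstep (m+1) (by omega) le_rfl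
      simp only [Nat.add_sub_cancel] at h2
      have hc : ((m + 1 - j : ℕ) : ℝ) = ((m - j : ℕ) : ℝ) + 1 := by
        rw [Nat.succ_sub hjm']; push_cast; ring
      rw [hc]
      nlinarith


set_option maxHeartbeats 1000000 in
/-- If `c₁ m ≤ ν_m ≤ c₂ m` for large `m`, multiplicities satisfy `M_m ≤ C m^{n-2}`, and
`ν_m² - ν_{m-1}² ≥ α ν_m` for large `m`, then
`∑_{j=1}^m M_j · min(√(α ν_m), 2α ν_m (ν_m² - ν_j²)^{-1/2}) = O(m^{n-1})`
(where for `j = m` the first expression is used). -/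
theorem multiplicity_weighted_sum_bound (ν : ℕ → ℝ) (M : ℕ → ℕ) (α C c₁ c₂ : ℝ) (n : ℕ)
    (hn : 2 ≤ n) (hα : 0 < α) (hC : 0 < C) (hc₁ : 0 < c₁) (hc₂ : 0 < c₂)
    (hpos : ∀ m, 0 < ν m) (hmono : StrictMono ν)
    (hM : ∀ m, (M m : ℝ) ≤ C * (m : ℝ) ^ (n - 2))
    (hlin : ∃ M₀, ∀ m ≥ M₀, c₁ * m ≤ ν m ∧ ν m ≤ c₂ * m)
    (hgap : ∃ M₀, ∀ m ≥ M₀, α * ν m ≤ ν m ^ 2 - ν (m - 1) ^ 2) :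
    ∃ C' M₀, ∀ m ≥ M₀,
      ∑ j ∈ Finset.Icc 1 m,
          (M j : ℝ) *
            (if j = m then Real.sqrt (α * ν m)
             else min (Real.sqrt (α * ν m)) (2 * α * ν m / Real.sqrt (ν m ^ 2 - ν j ^ 2))) ≤
        C' * (m : ℝ) ^ (n - 1) := by
  obtain ⟨L₁, hlin⟩ := hlin
  obtain ⟨L₂, hgap⟩ := hgap
  -- θ
  obtain ⟨θ, hθ, hθdef⟩ : ∃ θ:ℝ, 0 < θ ∧ θ = c₁/(2*c₂) := ⟨_, by positivity, rfl⟩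
  have hG0 : 0 < α * c₁ * θ := by positivity
  have hu : 0 < Real.sqrt (α * c₁ * θ) := Real.sqrt_pos.2 hG0
  -- K
  obtain ⟨K, hKpos, h3K, hKc₂, hKu⟩ :
      ∃ K:ℝ, 0 < K ∧ 3*α ≤ K ∧ Real.sqrt (α*c₂) ≤ K ∧
        2*Real.sqrt 2*α*c₂ ≤ K * Real.sqrt (α*c₁*θ) := by
    refine ⟨3*α + Real.sqrt (α*c₂) + 2*Real.sqrt 2*α*c₂/Real.sqrt (α*c₁*θ), ?_, ?_, ?_, ?_⟩
    · have : (0:ℝ) ≤ Real.sqrt (α*c₂) := Real.sqrt_nonneg _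
      have h2 : (0:ℝ) ≤ 2*Real.sqrt 2*α*c₂/Real.sqrt (α*c₁*θ) := by
        apply div_nonneg _ hu.le; positivity
      linarith
    · have : (0:ℝ) ≤ Real.sqrt (α*c₂) := Real.sqrt_nonneg _
      have h2 : (0:ℝ) ≤ 2*Real.sqrt 2*α*c₂/Real.sqrt (α*c₁*θ) := by
        apply div_nonneg _ hu.le; positivity
      linarith
    · have h2 : (0:ℝ) ≤ 2*Real.sqrt 2*α*c₂/Real.sqrt (α*c₁*θ) := by
        apply div_nonneg _ hu.le; positivity
      nlinarith
    · rw [add_mul, add_mul, div_mul_cancel₀ _ hu.ne']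
      have : (0:ℝ) ≤ Real.sqrt (α*c₂) := Real.sqrt_nonneg _
      nlinarith
  set L : ℕ := max (max L₁ L₂) 1 with hL
  set N : ℕ := max L (Nat.ceil (2 * ν L / c₁) + 1) with hN
  refine ⟨2*K*C, N, ?_⟩
  intro m hm
  have hmL : L ≤ m := le_trans (le_max_left _ _) hm
  have hmL₁ : L₁ ≤ m := by omega
  have hm1 : 1 ≤ m := by omega
  have hmR : (0:ℝ) < m := by exact_mod_cast hm1
  have hνub : ν m ≤ c₂ * m := (hlin m hmL₁).2
  have hνlb : c₁ * m ≤ ν m := (hlin m hmL₁).1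
  have hνL : 2 * ν L < c₁ * m := by
    have h1 : 2 * ν L / c₁ ≤ ((Nat.ceil (2 * ν L / c₁) : ℕ) : ℝ) := Nat.le_ceil _
    have h2 : (Nat.ceil (2 * ν L / c₁) + 1 : ℕ) ≤ m := le_trans (le_max_right _ _) hm
    have h2' : ((Nat.ceil (2 * ν L / c₁) : ℕ) : ℝ) + 1 ≤ (m:ℝ) := by exact_mod_cast h2
    have h3 : 2 * ν L / c₁ < (m:ℝ) := by linarith
    rw [div_lt_iff₀ hc₁] at h3
    linarith
  have key : ∀ j ∈ Finset.Icc 1 m,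
      (M j : ℝ) * (if j = m then Real.sqrt (α * ν m)
          else min (Real.sqrt (α * ν m)) (2 * α * ν m / Real.sqrt (ν m ^ 2 - ν j ^ 2)))
        ≤ (C * (m:ℝ)^(n-2)) * (K * Real.sqrt m / Real.sqrt ((m - j + 1 : ℕ))) := by
    intro j hj
    rw [Finset.mem_Icc] at hj
    have hMj : (M j : ℝ) ≤ C * (m:ℝ)^(n-2) := by
      refine le_trans (hM j) ?_
      gcongr
      exact_mod_cast hj.2
    have hsmpos : (0:ℝ) < Real.sqrt ((m - j + 1 : ℕ)) := by
      apply Real.sqrt_pos.2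
      exact_mod_cast Nat.succ_pos (m - j)
    have hsm : Real.sqrt ((m - j + 1 : ℕ) : ℝ) ≤ Real.sqrt m := by
      apply Real.sqrt_le_sqrt
      exact_mod_cast (by omega : m - j + 1 ≤ m)
    have hterm_nonneg : (0:ℝ) ≤ (if j = m then Real.sqrt (α * ν m)
        else min (Real.sqrt (α * ν m)) (2 * α * ν m / Real.sqrt (ν m ^ 2 - ν j ^ 2))) := by
      split_ifs
      · exact Real.sqrt_nonneg _
      · refine le_min (Real.sqrt_nonneg _) ?_
        apply div_nonneg _ (Real.sqrt_nonneg _)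
        nlinarith [hpos m]
    have hT : (if j = m then Real.sqrt (α * ν m)
          else min (Real.sqrt (α * ν m)) (2 * α * ν m / Real.sqrt (ν m ^ 2 - ν j ^ 2)))
        ≤ K * Real.sqrt m / Real.sqrt ((m - j + 1 : ℕ)) := by
      by_cases hjm : j = m
      · rw [if_pos hjm, hjm, show m - m + 1 = 1 from by omega, Nat.cast_one, Real.sqrt_one,
          div_one]
        have h1 : Real.sqrt (α * ν m) ≤ Real.sqrt (α * c₂ * m) := by
          apply Real.sqrt_le_sqrt; nlinarith
        have h2 : Real.sqrt (α * c₂ * m) = Real.sqrt (α * c₂) * Real.sqrt m := by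
          rw [Real.sqrt_mul (by positivity)]
        refine le_trans h1 (le_trans h2.le ?_)
        exact mul_le_mul_of_nonneg_right hKc₂ (Real.sqrt_nonneg _)
      · rw [if_neg hjm]
        have hjlt : j < m := lt_of_le_of_ne hj.2 hjm
        have hνjm : ν j < ν m := hmono hjlt
        have hXpos : 0 < ν m ^ 2 - ν j ^ 2 := by nlinarith [hpos j]
        have hsX : 0 < Real.sqrt (ν m ^ 2 - ν j ^ 2) := Real.sqrt_pos.2 hXpos
        by_cases hcase : 2 * ν j ≤ ν m
        · -- small j: denominator comparable to ν m
          refine le_trans (min_le_right _ _) ?_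
          have hlow : (2/3) * ν m ≤ Real.sqrt (ν m ^ 2 - ν j ^ 2) := by
            rw [show (2/3) * ν m = Real.sqrt (((2/3) * ν m)^2) from
              (Real.sqrt_sq (by nlinarith [hpos m] : (0:ℝ) ≤ 2/3 * ν m)).symm]
            apply Real.sqrt_le_sqrt
            nlinarith [hpos j, hpos m, mul_le_mul hcase hcase (by nlinarith [hpos j]) (hpos m).le]
          have h58 : 2 * α * ν m / Real.sqrt (ν m ^ 2 - ν j ^ 2) ≤ 3*α := by
            rw [div_le_iff₀ hsX]
            have := mul_le_mul_of_nonneg_left hlow (show (0:ℝ) ≤ 3*α by positivity)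
            linarith
          refine le_trans h58 ?_
          rw [le_div_iff₀ hsmpos]
          exact mul_le_mul h3K hsm (Real.sqrt_nonneg _) hKpos.le
        · -- large j: use the gap telescoping
          push_neg at hcase
          have hjL : L ≤ j := by
            by_contra hlt
            push_neg at hlt
            have hν : ν j ≤ ν L := hmono.monotone (le_of_lt hlt)
            linarith
          have hjθ : θ * m ≤ (j:ℝ) := by
            have hj2 : ν j ≤ c₂ * j := (hlin j (by omega : j ≥ L₁)).2
            rw [hθdef, div_mul_eq_mul_div, div_le_iff₀ (by positivity)]
            nlinarith
          have htel : ((m - j : ℕ):ℝ) * (α * c₁ * θ * m) ≤ ν m ^ 2 - ν j ^ 2 := by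
            refine telescope_ge (fun k => ν k ^ 2) (α * c₁ * θ * m) j m hjlt.le ?_
            intro k hk1 hk2
            have hg := hgap k (by omega : k ≥ L₂)
            have hl := (hlin k (by omega : k ≥ L₁)).1
            have hkθ : θ * m ≤ (k:ℝ) := le_trans hjθ (by exact_mod_cast hk1.le)
            beta_reduce
            nlinarith [mul_le_mul_of_nonneg_left hkθ (by positivity : (0:ℝ) ≤ α*c₁),
              mul_le_mul_of_nonneg_left hl hα.le]
          refine le_trans (min_le_right _ _) ?_
          rw [div_le_div_iff₀ hsX hsmpos]
          have hd1 : 1 ≤ m - j := by omega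
          have hs0 : (0:ℝ) ≤ Real.sqrt ((m - j : ℕ)) := Real.sqrt_nonneg _
          have hspos : (0:ℝ) < Real.sqrt ((m - j : ℕ)) := by
            apply Real.sqrt_pos.2; exact_mod_cast hd1
          -- √(m-j+1) ≤ √2 √(m-j)
          have hs2 : Real.sqrt ((m - j + 1 : ℕ) : ℝ) ≤ Real.sqrt 2 * Real.sqrt ((m - j : ℕ)) := by
            rw [← Real.sqrt_mul (by norm_num : (0:ℝ) ≤ 2)]
            apply Real.sqrt_le_sqrt
            exact_mod_cast (by omega : m - j + 1 ≤ 2 * (m - j))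
          -- √X ≥ √(m-j) * (u * √m)
          have hX' : Real.sqrt ((m - j : ℕ)) * (Real.sqrt (α*c₁*θ) * Real.sqrt m)
              ≤ Real.sqrt (ν m ^ 2 - ν j ^ 2) := by
            have h1 : Real.sqrt (((m - j : ℕ):ℝ) * (α * c₁ * θ * m))
                ≤ Real.sqrt (ν m ^ 2 - ν j ^ 2) := Real.sqrt_le_sqrt htel
            rw [Real.sqrt_mul (Nat.cast_nonneg _), Real.sqrt_mul hG0.le] at h1
            exact h1
          have hmm : Real.sqrt (m:ℝ) * Real.sqrt (m:ℝ) = (m:ℝ) := Real.mul_self_sqrt hmR.le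
          calc 2 * α * ν m * Real.sqrt ((m - j + 1 : ℕ))
              ≤ 2 * α * (c₂ * m) * (Real.sqrt 2 * Real.sqrt ((m - j : ℕ))) := by
                apply mul_le_mul (by nlinarith) hs2 (Real.sqrt_nonneg _) (by positivity)
            _ = (2*Real.sqrt 2*α*c₂) * (Real.sqrt m * Real.sqrt m * Real.sqrt ((m - j : ℕ))) := by
                rw [hmm]; ring
            _ ≤ (K * Real.sqrt (α*c₁*θ)) * (Real.sqrt m * Real.sqrt m * Real.sqrt ((m - j : ℕ))) := by
                apply mul_le_mul_of_nonneg_right hKu (by positivity)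
            _ = K * Real.sqrt m * (Real.sqrt ((m - j : ℕ)) * (Real.sqrt (α*c₁*θ) * Real.sqrt m)) := by
                ring
            _ ≤ K * Real.sqrt m * Real.sqrt (ν m ^ 2 - ν j ^ 2) := by
                apply mul_le_mul_of_nonneg_left hX' (by positivity)
    exact mul_le_mul hMj hT hterm_nonneg (by positivity)
  have hsum := Finset.sum_le_sum key
  have hre : ∑ j ∈ Finset.Icc 1 m,
        (C * (m:ℝ)^(n-2)) * (K * Real.sqrt m / Real.sqrt ((m - j + 1 : ℕ)))
      = (C * (m:ℝ)^(n-2) * (K * Real.sqrt m)) * ∑ d ∈ Finset.Icc 1 m, (1:ℝ)/Real.sqrt d := by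
    rw [← sum_reflect m (fun d => (1:ℝ)/Real.sqrt d), Finset.mul_sum]
    exact Finset.sum_congr rfl (fun j _ => by ring)
  have hbnd : (C * (m:ℝ)^(n-2) * (K * Real.sqrt m)) * (∑ d ∈ Finset.Icc 1 m, (1:ℝ)/Real.sqrt d)
      ≤ (C * (m:ℝ)^(n-2) * (K * Real.sqrt m)) * (2 * Real.sqrt m) := by
    apply mul_le_mul_of_nonneg_left (sum_inv_sqrt_le m)
    have : (0:ℝ) ≤ C * (m:ℝ)^(n-2) := by positivity
    have h2 : (0:ℝ) ≤ K * Real.sqrt m := mul_nonneg hKpos.le (Real.sqrt_nonneg _)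
    exact mul_nonneg this h2
  have hpow : (m:ℝ)^(n-2) * (m:ℝ) = (m:ℝ)^(n-1) := by
    rw [← pow_succ]; congr 1; omega
  have hfin : (C * (m:ℝ)^(n-2) * (K * Real.sqrt m)) * (2 * Real.sqrt m)
      = 2*K*C * (m:ℝ)^(n-1) := by
    rw [← hpow]
    linear_combination (2*K*C*(m:ℝ)^(n-2)) * Real.mul_self_sqrt hmR.le
  calc ∑ j ∈ Finset.Icc 1 m,
          (M j : ℝ) *
            (if j = m then Real.sqrt (α * ν m)
             else min (Real.sqrt (α * ν m)) (2 * α * ν m / Real.sqrt (ν m ^ 2 - ν j ^ 2)))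
      ≤ ∑ j ∈ Finset.Icc 1 m,
          (C * (m:ℝ)^(n-2)) * (K * Real.sqrt m / Real.sqrt ((m - j + 1 : ℕ))) := hsum
    _ = (C * (m:ℝ)^(n-2) * (K * Real.sqrt m)) * ∑ d ∈ Finset.Icc 1 m, (1:ℝ)/Real.sqrt d := hre
    _ ≤ (C * (m:ℝ)^(n-2) * (K * Real.sqrt m)) * (2 * Real.sqrt m) := hbnd
    _ = 2*K*C * (m:ℝ)^(n-1) := hfin
end
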